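/- There exists a constant C > 0 (depending only on k₀) such that for every ν > 0, every r > 0, every w ∈ V, and every v ∈ V with ‖v‖_{ℓ⁴} ≤ r, one has −Re ∑ₙ Bₙ(w, v)·w̄ₙ ≤ (ν/2)·‖w‖² + C·(r⁴/ν³)·|w|². -/

import Mathlib

open Complex MeasureTheory Filter Topology

noncomputable section

/-- The wave numbers `kₙ = k₀ · 2ⁿ`. -/
def kk (k₀ : ℝ) (n : ℕ) : ℝ := k₀ * 2 ^ n

/-- The GOY nonlinearity `B(u,v)ₙ`; sequences are indexed from `1`, with the
convention that the `0`-th entry (playing the role of `u₀ = u₋₁ = 0`) vanishes. -/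
def goyB (k₀ : ℝ) (u v : ℕ → ℂ) (n : ℕ) : ℂ :=
  if n = 0 then 0 else
    Complex.I * (kk k₀ n : ℂ) *
      ((1 / 4) * (starRingEnd ℂ) (u (n + 1)) * (starRingEnd ℂ) (v (n - 1))
        - (1 / 2) * ((starRingEnd ℂ) (u (n + 1)) * (starRingEnd ℂ) (v (n + 2))
            + (starRingEnd ℂ) (u (n + 2)) * (starRingEnd ℂ) (v (n + 1)))
        + (1 / 8) * (starRingEnd ℂ) (u (n - 1)) * (starRingEnd ℂ) (v (n - 2)))

/-- Membership in `H`: square summability. -/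
def memH (u : ℕ → ℂ) : Prop := Summable fun n => ‖u n‖ ^ 2

/-- Membership in `V`. -/
def memV (k₀ : ℝ) (u : ℕ → ℂ) : Prop := Summable fun n => kk k₀ n ^ 2 * ‖u n‖ ^ 2

/-- `|u|² = ∑ₙ |uₙ|²`. -/
def hnormSq (u : ℕ → ℂ) : ℝ := ∑' n, ‖u n‖ ^ 2

/-- `‖u‖² = ∑ₙ kₙ²|uₙ|²`. -/
def vnormSq (k₀ : ℝ) (u : ℕ → ℂ) : ℝ := ∑' n, kk k₀ n ^ 2 * ‖u n‖ ^ 2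

/-- `‖u‖_{V'}² = ∑ₙ kₙ⁻²|uₙ|²`. -/
def vdualSq (k₀ : ℝ) (u : ℕ → ℂ) : ℝ := ∑' n, ‖u n‖ ^ 2 / kk k₀ n ^ 2

end

section StmtAux

lemma cs_summable {f g : ℕ → ℝ} (hf : ∀ n, 0 ≤ f n) (hg : ∀ n, 0 ≤ g n)
    (Hf : Summable fun n => f n ^ 2) (Hg : Summable fun n => g n ^ 2) :
    Summable (fun n => f n * g n) := by
  refine Summable.of_nonneg_of_le (fun n => mul_nonneg (hf n) (hg n))
    (fun n => ?_) (Hf.add Hg)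
  nlinarith [sq_nonneg (f n - g n)]

lemma cs_tsum {f g : ℕ → ℝ} (hf : ∀ n, 0 ≤ f n) (hg : ∀ n, 0 ≤ g n)
    (Hf : Summable fun n => f n ^ 2) (Hg : Summable fun n => g n ^ 2) :
    ∑' n, f n * g n ≤ Real.sqrt (∑' n, f n ^ 2) * Real.sqrt (∑' n, g n ^ 2) := by
  rw [← Real.sqrt_mul (tsum_nonneg fun n => sq_nonneg _)]
  refine Summable.tsum_le_of_sum_le (cs_summable hf hg Hf Hg) fun s => ?_
  refine (Real.le_sqrt (Finset.sum_nonneg fun i _ => mul_nonneg (hf i) (hg i))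
    (mul_nonneg (tsum_nonneg fun n => sq_nonneg _) (tsum_nonneg fun n => sq_nonneg _))).2 ?_
  calc (∑ i ∈ s, f i * g i) ^ 2 ≤ (∑ i ∈ s, f i ^ 2) * ∑ i ∈ s, g i ^ 2 :=
      Finset.sum_mul_sq_le_sq_mul_sq s f g
    _ ≤ (∑' n, f n ^ 2) * ∑' n, g n ^ 2 := by
      apply mul_le_mul (Summable.sum_le_tsum s (fun i _ => sq_nonneg _) Hf)
        (Summable.sum_le_tsum s (fun i _ => sq_nonneg _) Hg)
        (Finset.sum_nonneg fun i _ => sq_nonneg _) (tsum_nonneg fun n => sq_nonneg _)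

lemma shift_add_summable {h : ℕ → ℝ} (hs : Summable h) (j : ℕ) :
    Summable (fun n => h (n + j)) := (summable_nat_add_iff j).2 hs

lemma shift_add_tsum_le {h : ℕ → ℝ} (hnn : ∀ n, 0 ≤ h n) (hs : Summable h) (j : ℕ) :
    ∑' n, h (n + j) ≤ ∑' n, h n := by
  have := Summable.sum_add_tsum_nat_add j hs
  have h2 : 0 ≤ ∑ i ∈ Finset.range j, h i := Finset.sum_nonneg fun i _ => hnn i
  linarith

lemma shift_sub_summable {h : ℕ → ℝ} (hs : Summable h) (j : ℕ) :
    Summable (fun n => h (n - j)) := by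
  apply (summable_nat_add_iff j).1
  simpa using hs

lemma shift_sub_tsum_le {h : ℕ → ℝ} (h0 : h 0 = 0) (hs : Summable h) (j : ℕ) :
    ∑' n, h (n - j) ≤ ∑' n, h n := by
  have hsum := shift_sub_summable hs j
  have := Summable.sum_add_tsum_nat_add (f := fun n => h (n - j)) j hsum
  have h1 : ∑ i ∈ Finset.range j, h (i - j) = 0 := by
    apply Finset.sum_eq_zero
    intro i hi
    rw [Nat.sub_eq_zero_of_le (le_of_lt (Finset.mem_range.1 hi)), h0]
  have h2 : ∑' (n : ℕ), h (n + j - j) = ∑' n, h n := by simp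
  linarith [le_of_eq (this.symm)]

lemma young_base (a c : ℝ) (_ : 0 ≤ a) (_ : 0 ≤ c) :
    a ^ 3 * c ≤ a ^ 4 / 2 + 27 / 32 * c ^ 4 := by
  nlinarith [mul_nonneg (sq_nonneg (2*a - 3*c)) (add_nonneg (sq_nonneg (2*a + c))
    (mul_nonneg (by norm_num : (0:ℝ) ≤ 2) (sq_nonneg c)))]

lemma young (a b ν : ℝ) (ha : 0 ≤ a) (hb : 0 ≤ b) (hν : 0 < ν) :
    a ^ 3 * b ≤ ν / 2 * a ^ 4 + 27 / (32 * ν ^ 3) * b ^ 4 := by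
  have h := young_base a (b / ν) ha (div_nonneg hb hν.le)
  have h2 := mul_le_mul_of_nonneg_left h hν.le
  rw [div_pow] at h2
  calc a ^ 3 * b = ν * (a ^ 3 * (b / ν)) := by field_simp
    _ ≤ ν * (a ^ 4 / 2 + 27 / 32 * (b ^ 4 / ν ^ 4)) := h2
    _ = ν / 2 * a ^ 4 + 27 / (32 * ν ^ 3) * b ^ 4 := by field_simp

lemma final_alg (k₀ r ν p q : ℝ) (hk : 0 < k₀) (hr : 0 < r) (hν : 0 < ν)
    (hp : 0 ≤ p) (hq : 0 ≤ q) (hcon : Real.sqrt (2 * k₀) * q ≤ p) :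
    11 / 8 * r * (p ^ 2 * q ^ 2) ≤ ν / 2 * p ^ 4 + 1 / k₀ ^ 2 * (r ^ 4 / ν ^ 3) * q ^ 4 := by
  set κ := Real.sqrt (2 * k₀) with hκdef
  have hκ : 0 < κ := Real.sqrt_pos.2 (by linarith)
  have hκ2 : κ ^ 2 = 2 * k₀ := Real.sq_sqrt (by linarith)
  have hκ4 : κ ^ 4 = 4 * k₀ ^ 2 := by nlinarith [hκ2]
  have step1 : 11 / 8 * r * (p ^ 2 * q ^ 2) ≤ p ^ 3 * (11 / (8 * κ) * r * q) := by
    rw [← sub_nonneg]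
    have h1 : p ^ 2 * q * (κ * q) ≤ p ^ 2 * q * p :=
      mul_le_mul_of_nonneg_left hcon (by positivity)
    have e : p ^ 3 * (11 / (8 * κ) * r * q) - 11 / 8 * r * (p ^ 2 * q ^ 2)
        = (11 / (8 * κ)) * r * (p ^ 2 * q * p - p ^ 2 * q * (κ * q)) := by
      field_simp
    rw [e]
    exact mul_nonneg (by positivity) (sub_nonneg.2 h1)
  have step2 := young p (11 / (8 * κ) * r * q) ν hp (by positivity) hν
  have step3 : 27 / (32 * ν ^ 3) * (11 / (8 * κ) * r * q) ^ 4
      ≤ 1 / k₀ ^ 2 * (r ^ 4 / ν ^ 3) * q ^ 4 := by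
    have e : 27 / (32 * ν ^ 3) * (11 / (8 * κ) * r * q) ^ 4
        = 395307 / 524288 * (1 / k₀ ^ 2) * (r ^ 4 / ν ^ 3) * q ^ 4 := by
      rw [mul_pow, mul_pow, div_pow, mul_pow, hκ4]
      field_simp
      ring
    rw [e]
    have : (0:ℝ) ≤ 1 / k₀ ^ 2 * (r ^ 4 / ν ^ 3) * q ^ 4 := by positivity
    nlinarith
  linarith

-- Cauchy–Schwarz for a product of two shifted sequences in ℓ⁴
lemma piece {F G : ℕ → ℝ} {X Y : ℝ} (hF : ∀ n, 0 ≤ F n) (hG : ∀ n, 0 ≤ G n)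
    (hF4 : Summable fun n => F n ^ 4) (hG4 : Summable fun n => G n ^ 4)
    (HF : ∑' n, F n ^ 4 ≤ X ^ 2) (HG : ∑' n, G n ^ 4 ≤ Y ^ 2)
    (hX : 0 ≤ X) (hY : 0 ≤ Y) :
    Summable (fun n => (F n * G n) ^ 2) ∧ ∑' n, (F n * G n) ^ 2 ≤ X * Y := by
  have hF2 : Summable fun n => (F n ^ 2) ^ 2 := by
    simpa [← pow_mul] using hF4
  have hG2 : Summable fun n => (G n ^ 2) ^ 2 := by
    simpa [← pow_mul] using hG4
  have hs : Summable (fun n => F n ^ 2 * G n ^ 2) :=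
    cs_summable (fun n => sq_nonneg _) (fun n => sq_nonneg _) hF2 hG2
  constructor
  · simpa [mul_pow] using hs
  have h1 := cs_tsum (f := fun n => F n ^ 2) (g := fun n => G n ^ 2)
    (fun n => sq_nonneg _) (fun n => sq_nonneg _) hF2 hG2
  have e1 : ∑' n, (F n ^ 2) ^ 2 ≤ X ^ 2 := by
    simpa [← pow_mul] using HF
  have e2 : ∑' n, (G n ^ 2) ^ 2 ≤ Y ^ 2 := by
    simpa [← pow_mul] using HG
  calc ∑' n, (F n * G n) ^ 2 = ∑' n, F n ^ 2 * G n ^ 2 := by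
        simp [mul_pow]
    _ ≤ Real.sqrt (∑' n, (F n ^ 2) ^ 2) * Real.sqrt (∑' n, (G n ^ 2) ^ 2) := h1
    _ ≤ Real.sqrt (X ^ 2) * Real.sqrt (Y ^ 2) :=
        mul_le_mul (Real.sqrt_le_sqrt e1) (Real.sqrt_le_sqrt e2) (Real.sqrt_nonneg _)
          (Real.sqrt_nonneg _)
    _ = X * Y := by rw [Real.sqrt_sq hX, Real.sqrt_sq hY]

end StmtAux

/-- For `‖v‖_{ℓ⁴} ≤ r`,
`−Re ∑ₙ Bₙ(w,v)·w̄ₙ ≤ (ν/2)‖w‖² + C (r⁴/ν³) |w|²`. -/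
theorem stmt_10 (k₀ : ℝ) (hk₀ : 0 < k₀) :
    ∃ C : ℝ, 0 < C ∧ ∀ ν : ℝ, 0 < ν → ∀ r : ℝ, 0 < r → ∀ w v : ℕ → ℂ,
      w 0 = 0 → v 0 = 0 → memV k₀ w → memV k₀ v →
      (∑' n, ‖v n‖ ^ 4) ^ ((1 : ℝ) / 4) ≤ r →
      -(∑' n, goyB k₀ w v n * (starRingEnd ℂ) (w n)).re ≤
        ν / 2 * vnormSq k₀ w + C * (r ^ 4 / ν ^ 3) * hnormSq w := by
  refine ⟨1 / k₀ ^ 2, by positivity, ?_⟩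
  intro ν hν r hr w v hw0 hv0 hWv hVv hr4
  -- basic positivity
  have hkpos : ∀ n, 0 < kk k₀ n := fun n => by
    simp only [kk]; positivity
  have hkge : ∀ n, k₀ ≤ kk k₀ n := fun n => by
    simp only [kk]
    nlinarith [one_le_pow₀ (by norm_num : (1:ℝ) ≤ 2) (n := n)]
  -- ℓ² summability
  have hW2 : Summable fun n => ‖w n‖ ^ 2 := by
    refine Summable.of_nonneg_of_le (fun n => sq_nonneg _) (fun n => ?_)
      (hWv.mul_left (1 / k₀ ^ 2))
    have := hkge n
    have h2 : k₀ ^ 2 ≤ kk k₀ n ^ 2 := by nlinarith [hkpos n]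
    rw [div_mul_eq_mul_div, one_mul, le_div_iff₀ (by positivity)]
    nlinarith [sq_nonneg ‖w n‖]
  have hV2 : Summable fun n => ‖v n‖ ^ 2 := by
    refine Summable.of_nonneg_of_le (fun n => sq_nonneg _) (fun n => ?_)
      (hVv.mul_left (1 / k₀ ^ 2))
    have := hkge n
    have h2 : k₀ ^ 2 ≤ kk k₀ n ^ 2 := by nlinarith [hkpos n]
    rw [div_mul_eq_mul_div, one_mul, le_div_iff₀ (by positivity)]
    nlinarith [sq_nonneg ‖v n‖]
  set Hw : ℝ := hnormSq w with hHwdef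
  set A : ℝ := vnormSq k₀ w with hAdef
  have hHw0 : 0 ≤ Hw := tsum_nonneg fun n => sq_nonneg _
  have hA0 : 0 ≤ A := tsum_nonneg fun n => mul_nonneg (sq_nonneg _) (sq_nonneg _)
  -- ℓ⁴ summability and bounds
  have hW2le : ∀ n, ‖w n‖ ^ 2 ≤ Hw := fun n =>
    Summable.le_tsum hW2 n fun j _ => sq_nonneg _
  have hV2le : ∀ n, ‖v n‖ ^ 2 ≤ ∑' m, ‖v m‖ ^ 2 := fun n =>
    Summable.le_tsum hV2 n fun j _ => sq_nonneg _
  have hW4 : Summable fun n => ‖w n‖ ^ 4 := by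
    refine Summable.of_nonneg_of_le (fun n => by positivity) (fun n => ?_)
      (hW2.mul_left Hw)
    nlinarith [hW2le n, sq_nonneg ‖w n‖]
  have hV4 : Summable fun n => ‖v n‖ ^ 4 := by
    refine Summable.of_nonneg_of_le (fun n => by positivity) (fun n => ?_)
      (hV2.mul_left (∑' m, ‖v m‖ ^ 2))
    nlinarith [hV2le n, sq_nonneg ‖v n‖]
  have hW4sum : ∑' n, ‖w n‖ ^ 4 ≤ Hw ^ 2 := by
    calc ∑' n, ‖w n‖ ^ 4 ≤ ∑' n, Hw * ‖w n‖ ^ 2 := by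
          refine Summable.tsum_le_tsum (fun n => ?_) hW4 (hW2.mul_left Hw)
          nlinarith [hW2le n, sq_nonneg ‖w n‖]
      _ = Hw * Hw := by rw [tsum_mul_left, hHwdef, hnormSq]
      _ = Hw ^ 2 := by ring
  have hRv4 : ∑' n, ‖v n‖ ^ 4 ≤ r ^ 4 := by
    have h0 : (0:ℝ) ≤ ∑' n, ‖v n‖ ^ 4 := tsum_nonneg fun n => by positivity
    have : ((∑' n, ‖v n‖ ^ 4) ^ ((1:ℝ) / 4)) ^ (4:ℕ) ≤ r ^ (4:ℕ) :=
      pow_le_pow_left₀ (Real.rpow_nonneg h0 _) hr4 4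
    rwa [← Real.rpow_natCast ((∑' n, ‖v n‖ ^ 4) ^ ((1:ℝ)/4)) 4, ← Real.rpow_mul h0,
      show ((1:ℝ)/4) * (4:ℕ) = 1 by norm_num, Real.rpow_one] at this
  have hV4sum : ∑' n, ‖v n‖ ^ 4 ≤ (r ^ 2) ^ 2 := by
    calc ∑' n, ‖v n‖ ^ 4 ≤ r ^ 4 := hRv4
      _ = (r ^ 2) ^ 2 := by ring
  -- shifted ℓ⁴ data
  have hw04 : ‖w 0‖ ^ 4 = 0 := by rw [hw0]; simp
  have hv04 : ‖v 0‖ ^ 4 = 0 := by rw [hv0]; simp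
  -- piece bounds
  have p1 := piece (F := fun n => ‖w (n + 1)‖) (G := fun n => ‖v (n - 1)‖)
    (fun n => norm_nonneg _) (fun n => norm_nonneg _)
    (shift_add_summable hW4 1) (shift_sub_summable hV4 1)
    (le_trans (shift_add_tsum_le (fun n => by positivity) hW4 1) hW4sum)
    (le_trans (shift_sub_tsum_le hv04 hV4 1) hV4sum) hHw0 (by positivity)
  have p2 := piece (F := fun n => ‖w (n + 1)‖) (G := fun n => ‖v (n + 2)‖)
    (fun n => norm_nonneg _) (fun n => norm_nonneg _)
    (shift_add_summable hW4 1) (shift_add_summable hV4 2)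
    (le_trans (shift_add_tsum_le (fun n => by positivity) hW4 1) hW4sum)
    (le_trans (shift_add_tsum_le (fun n => by positivity) hV4 2) hV4sum) hHw0 (by positivity)
  have p3 := piece (F := fun n => ‖w (n + 2)‖) (G := fun n => ‖v (n + 1)‖)
    (fun n => norm_nonneg _) (fun n => norm_nonneg _)
    (shift_add_summable hW4 2) (shift_add_summable hV4 1)
    (le_trans (shift_add_tsum_le (fun n => by positivity) hW4 2) hW4sum)
    (le_trans (shift_add_tsum_le (fun n => by positivity) hV4 1) hV4sum) hHw0 (by positivity)
  have p4 := piece (F := fun n => ‖w (n - 1)‖) (G := fun n => ‖v (n - 2)‖)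
    (fun n => norm_nonneg _) (fun n => norm_nonneg _)
    (shift_sub_summable hW4 1) (shift_sub_summable hV4 2)
    (le_trans (shift_sub_tsum_le hw04 hW4 1) hW4sum)
    (le_trans (shift_sub_tsum_le hv04 hV4 2) hV4sum) hHw0 (by positivity)
  -- the big diagonal sequence
  set f : ℕ → ℝ := fun n => kk k₀ n * ‖w n‖ with hfdef
  have hf0 : ∀ n, 0 ≤ f n := fun n => mul_nonneg (hkpos n).le (norm_nonneg _)
  have hf2 : Summable fun n => f n ^ 2 := by
    simpa [hfdef, mul_pow, memV] using hWv
  have hf2sum : ∑' n, f n ^ 2 = A := by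
    rw [hAdef, vnormSq]
    exact tsum_congr fun n => by simp [hfdef, mul_pow]
  -- the four main sums
  have q1sum : Summable fun n => f n * (‖w (n + 1)‖ * ‖v (n - 1)‖) :=
    cs_summable hf0 (fun n => by positivity) hf2 p1.1
  have q2sum : Summable fun n => f n * (‖w (n + 1)‖ * ‖v (n + 2)‖) :=
    cs_summable hf0 (fun n => by positivity) hf2 p2.1
  have q3sum : Summable fun n => f n * (‖w (n + 2)‖ * ‖v (n + 1)‖) :=
    cs_summable hf0 (fun n => by positivity) hf2 p3.1
  have q4sum : Summable fun n => f n * (‖w (n - 1)‖ * ‖v (n - 2)‖) :=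
    cs_summable hf0 (fun n => by positivity) hf2 p4.1
  have key : ∀ (g : ℕ → ℝ), (∀ n, 0 ≤ g n) → Summable (fun n => g n ^ 2) →
      (∑' n, g n ^ 2 ≤ Hw * r ^ 2) →
      ∑' n, f n * g n ≤ Real.sqrt A * (Real.sqrt Hw * r) := by
    intro g hg hg2 hg2le
    calc ∑' n, f n * g n ≤ Real.sqrt (∑' n, f n ^ 2) * Real.sqrt (∑' n, g n ^ 2) :=
        cs_tsum hf0 hg hf2 hg2
      _ ≤ Real.sqrt A * Real.sqrt (Hw * r ^ 2) := by
          rw [hf2sum]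
          exact mul_le_mul_of_nonneg_left (Real.sqrt_le_sqrt hg2le) (Real.sqrt_nonneg _)
      _ = Real.sqrt A * (Real.sqrt Hw * r) := by
          rw [Real.sqrt_mul hHw0, Real.sqrt_sq hr.le]
  have q1 : ∑' n, f n * (‖w (n + 1)‖ * ‖v (n - 1)‖) ≤ Real.sqrt A * (Real.sqrt Hw * r) := by
    simpa using key _ (fun n => by positivity) p1.1 p1.2
  have q2 : ∑' n, f n * (‖w (n + 1)‖ * ‖v (n + 2)‖) ≤ Real.sqrt A * (Real.sqrt Hw * r) := by
    simpa using key _ (fun n => by positivity) p2.1 p2.2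
  have q3 : ∑' n, f n * (‖w (n + 2)‖ * ‖v (n + 1)‖) ≤ Real.sqrt A * (Real.sqrt Hw * r) := by
    simpa using key _ (fun n => by positivity) p3.1 p3.2
  have q4 : ∑' n, f n * (‖w (n - 1)‖ * ‖v (n - 2)‖) ≤ Real.sqrt A * (Real.sqrt Hw * r) := by
    simpa using key _ (fun n => by positivity) p4.1 p4.2
  -- pointwise bound on the summand
  set φ : ℕ → ℝ := fun n =>
    1/4 * (f n * (‖w (n + 1)‖ * ‖v (n - 1)‖)) +
    1/2 * (f n * (‖w (n + 1)‖ * ‖v (n + 2)‖)) +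
    1/2 * (f n * (‖w (n + 2)‖ * ‖v (n + 1)‖)) +
    1/8 * (f n * (‖w (n - 1)‖ * ‖v (n - 2)‖)) with hφdef
  have hφnn : ∀ n, 0 ≤ φ n := by
    intro n
    have := hf0 n
    have h1 : (0:ℝ) ≤ ‖w (n+1)‖ * ‖v (n-1)‖ := by positivity
    have h2 : (0:ℝ) ≤ ‖w (n+1)‖ * ‖v (n+2)‖ := by positivity
    have h3 : (0:ℝ) ≤ ‖w (n+2)‖ * ‖v (n+1)‖ := by positivity
    have h4 : (0:ℝ) ≤ ‖w (n-1)‖ * ‖v (n-2)‖ := by positivity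
    simp only [hφdef]
    positivity
  have hpt : ∀ n, ‖goyB k₀ w v n * (starRingEnd ℂ) (w n)‖ ≤ φ n := by
    intro n
    rcases eq_or_ne n 0 with rfl | hn
    · simp [goyB, hφnn 0]
    · have hnorm : ‖goyB k₀ w v n * (starRingEnd ℂ) (w n)‖ =
        kk k₀ n * ‖((1 / 4 : ℂ) * (starRingEnd ℂ) (w (n + 1)) * (starRingEnd ℂ) (v (n - 1))
          - (1 / 2 : ℂ) * ((starRingEnd ℂ) (w (n + 1)) * (starRingEnd ℂ) (v (n + 2))
              + (starRingEnd ℂ) (w (n + 2)) * (starRingEnd ℂ) (v (n + 1)))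
          + (1 / 8 : ℂ) * (starRingEnd ℂ) (w (n - 1)) * (starRingEnd ℂ) (v (n - 2)))‖ * ‖w n‖ := by
        rw [goyB, if_neg hn]
        rw [norm_mul, norm_mul, norm_mul, Complex.norm_I, one_mul, RCLike.norm_conj,
          Complex.norm_real, Real.norm_eq_abs, abs_of_pos (hkpos n)]
      rw [hnorm]
      have hE : ‖((1 / 4 : ℂ) * (starRingEnd ℂ) (w (n + 1)) * (starRingEnd ℂ) (v (n - 1))
          - (1 / 2 : ℂ) * ((starRingEnd ℂ) (w (n + 1)) * (starRingEnd ℂ) (v (n + 2))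
              + (starRingEnd ℂ) (w (n + 2)) * (starRingEnd ℂ) (v (n + 1)))
          + (1 / 8 : ℂ) * (starRingEnd ℂ) (w (n - 1)) * (starRingEnd ℂ) (v (n - 2)))‖ ≤
          1/4 * (‖w (n+1)‖ * ‖v (n-1)‖) + 1/2 * (‖w (n+1)‖ * ‖v (n+2)‖)
            + 1/2 * (‖w (n+2)‖ * ‖v (n+1)‖) + 1/8 * (‖w (n-1)‖ * ‖v (n-2)‖) := by
        have t1 := norm_add_le ((1 / 4 : ℂ) * (starRingEnd ℂ) (w (n + 1)) * (starRingEnd ℂ) (v (n - 1))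
          - (1 / 2 : ℂ) * ((starRingEnd ℂ) (w (n + 1)) * (starRingEnd ℂ) (v (n + 2))
              + (starRingEnd ℂ) (w (n + 2)) * (starRingEnd ℂ) (v (n + 1))))
          ((1 / 8 : ℂ) * (starRingEnd ℂ) (w (n - 1)) * (starRingEnd ℂ) (v (n - 2)))
        have t2 := norm_sub_le ((1 / 4 : ℂ) * (starRingEnd ℂ) (w (n + 1)) * (starRingEnd ℂ) (v (n - 1)))
          ((1 / 2 : ℂ) * ((starRingEnd ℂ) (w (n + 1)) * (starRingEnd ℂ) (v (n + 2))
              + (starRingEnd ℂ) (w (n + 2)) * (starRingEnd ℂ) (v (n + 1))))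
        have t3 := norm_add_le ((starRingEnd ℂ) (w (n + 1)) * (starRingEnd ℂ) (v (n + 2)))
          ((starRingEnd ℂ) (w (n + 2)) * (starRingEnd ℂ) (v (n + 1)))
        have e1 : ‖(1 / 4 : ℂ) * (starRingEnd ℂ) (w (n + 1)) * (starRingEnd ℂ) (v (n - 1))‖
            = 1/4 * (‖w (n+1)‖ * ‖v (n-1)‖) := by
          rw [norm_mul, norm_mul, RCLike.norm_conj, RCLike.norm_conj]
          norm_num [mul_assoc]
        have e2 : ‖(starRingEnd ℂ) (w (n + 1)) * (starRingEnd ℂ) (v (n + 2))‖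
            = ‖w (n+1)‖ * ‖v (n+2)‖ := by
          rw [norm_mul, RCLike.norm_conj, RCLike.norm_conj]
        have e3 : ‖(starRingEnd ℂ) (w (n + 2)) * (starRingEnd ℂ) (v (n + 1))‖
            = ‖w (n+2)‖ * ‖v (n+1)‖ := by
          rw [norm_mul, RCLike.norm_conj, RCLike.norm_conj]
        have e4 : ‖(1 / 8 : ℂ) * (starRingEnd ℂ) (w (n - 1)) * (starRingEnd ℂ) (v (n - 2))‖
            = 1/8 * (‖w (n-1)‖ * ‖v (n-2)‖) := by
          rw [norm_mul, norm_mul, RCLike.norm_conj, RCLike.norm_conj]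
          norm_num [mul_assoc]
        have e5 : ‖(1 / 2 : ℂ) * ((starRingEnd ℂ) (w (n + 1)) * (starRingEnd ℂ) (v (n + 2))
              + (starRingEnd ℂ) (w (n + 2)) * (starRingEnd ℂ) (v (n + 1)))‖
            = 1/2 * ‖(starRingEnd ℂ) (w (n + 1)) * (starRingEnd ℂ) (v (n + 2))
              + (starRingEnd ℂ) (w (n + 2)) * (starRingEnd ℂ) (v (n + 1))‖ := by
          rw [norm_mul]
          norm_num
        rw [e4] at t1
        rw [e1, e5] at t2
        rw [e2, e3] at t3
        linarith
      calc kk k₀ n * ‖_‖ * ‖w n‖ ≤ kk k₀ n *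
          (1/4 * (‖w (n+1)‖ * ‖v (n-1)‖) + 1/2 * (‖w (n+1)‖ * ‖v (n+2)‖)
            + 1/2 * (‖w (n+2)‖ * ‖v (n+1)‖) + 1/8 * (‖w (n-1)‖ * ‖v (n-2)‖)) * ‖w n‖ := by
            gcongr
            exact (hkpos n).le
        _ = φ n := by simp only [hφdef, hfdef]; ring
  -- summability of φ and of the norms
  have hφsum : Summable φ :=
    (((q1sum.mul_left (1/4)).add (q2sum.mul_left (1/2))).add (q3sum.mul_left (1/2))).add
      (q4sum.mul_left (1/8))
  have hFnorm : Summable fun n => ‖goyB k₀ w v n * (starRingEnd ℂ) (w n)‖ :=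
    Summable.of_nonneg_of_le (fun n => norm_nonneg _) hpt hφsum
  -- split ∑ φ
  have hφtsum : ∑' n, φ n ≤ 11/8 * (Real.sqrt A * (Real.sqrt Hw * r)) := by
    have e : ∑' n, φ n = 1/4 * ∑' n, f n * (‖w (n + 1)‖ * ‖v (n - 1)‖)
        + 1/2 * ∑' n, f n * (‖w (n + 1)‖ * ‖v (n + 2)‖)
        + 1/2 * ∑' n, f n * (‖w (n + 2)‖ * ‖v (n + 1)‖)
        + 1/8 * ∑' n, f n * (‖w (n - 1)‖ * ‖v (n - 2)‖) := by
      simp only [hφdef]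
      rw [Summable.tsum_add (((q1sum.mul_left (1/4)).add (q2sum.mul_left (1/2))).add
          (q3sum.mul_left (1/2))) (q4sum.mul_left (1/8)),
        Summable.tsum_add ((q1sum.mul_left (1/4)).add (q2sum.mul_left (1/2)))
          (q3sum.mul_left (1/2)),
        Summable.tsum_add (q1sum.mul_left (1/4)) (q2sum.mul_left (1/2)),
        tsum_mul_left, tsum_mul_left, tsum_mul_left, tsum_mul_left]
    rw [e]
    linarith [q1, q2, q3, q4]
  -- the constraint 4k₀²Hw ≤ A
  have hHA : 4 * k₀ ^ 2 * Hw ≤ A := by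
    rw [hHwdef, hAdef, hnormSq, vnormSq, ← tsum_mul_left]
    refine Summable.tsum_le_tsum (fun n => ?_) (hW2.mul_left _) hWv
    rcases eq_or_ne n 0 with rfl | hn
    · rw [hw0]; simp
    · have h2 : (2:ℝ) ≤ 2 ^ n := by
        calc (2:ℝ) = 2 ^ 1 := by norm_num
          _ ≤ 2 ^ n := pow_le_pow_right₀ (by norm_num) (Nat.one_le_iff_ne_zero.2 hn)
      have h2k : 2 * k₀ ≤ kk k₀ n := by
        rw [kk]
        calc 2 * k₀ = k₀ * 2 := by ring
          _ ≤ k₀ * 2 ^ n := mul_le_mul_of_nonneg_left h2 hk₀.le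
      have hsq : (2 * k₀) ^ 2 ≤ kk k₀ n ^ 2 := pow_le_pow_left₀ (by positivity) h2k 2
      calc 4 * k₀ ^ 2 * ‖w n‖ ^ 2 = (2 * k₀) ^ 2 * ‖w n‖ ^ 2 := by ring
        _ ≤ kk k₀ n ^ 2 * ‖w n‖ ^ 2 := mul_le_mul_of_nonneg_right hsq (sq_nonneg _)
  -- put it together
  set p : ℝ := Real.sqrt (Real.sqrt A) with hpdef
  set q : ℝ := Real.sqrt (Real.sqrt Hw) with hqdef
  have hp4 : p ^ 4 = A := by
    rw [hpdef, show (4:ℕ) = 2 * 2 by norm_num, pow_mul,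
      Real.sq_sqrt (Real.sqrt_nonneg _), Real.sq_sqrt hA0]
  have hq4 : q ^ 4 = Hw := by
    rw [hqdef, show (4:ℕ) = 2 * 2 by norm_num, pow_mul,
      Real.sq_sqrt (Real.sqrt_nonneg _), Real.sq_sqrt hHw0]
  have hp2 : p ^ 2 = Real.sqrt A := Real.sq_sqrt (Real.sqrt_nonneg _)
  have hq2 : q ^ 2 = Real.sqrt Hw := Real.sq_sqrt (Real.sqrt_nonneg _)
  have hcon : Real.sqrt (2 * k₀) * q ≤ p := by
    have e0 : (2 * k₀) ^ 2 * Hw ≤ A := le_trans (le_of_eq (by ring)) hHA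
    have e1 : Real.sqrt ((2 * k₀) ^ 2 * Hw) ≤ Real.sqrt A := Real.sqrt_le_sqrt e0
    have e2 : Real.sqrt ((2 * k₀) ^ 2 * Hw) = 2 * k₀ * Real.sqrt Hw := by
      rw [Real.sqrt_mul (sq_nonneg _), Real.sqrt_sq (by linarith)]
    have h1 : (Real.sqrt (2 * k₀) * q) ^ 2 ≤ p ^ 2 := by
      rw [mul_pow, hp2, hq2, Real.sq_sqrt (by linarith : (0:ℝ) ≤ 2 * k₀)]
      rw [e2] at e1
      exact e1
    exact (pow_le_pow_iff_left₀ (by positivity) (Real.sqrt_nonneg _) two_ne_zero).1 h1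
  have halg := final_alg k₀ r ν p q hk₀ hr hν (Real.sqrt_nonneg _) (Real.sqrt_nonneg _) hcon
  rw [hp2, hq2, hp4, hq4] at halg
  -- chain
  have hre : -(∑' n, goyB k₀ w v n * (starRingEnd ℂ) (w n)).re ≤
      ∑' n, ‖goyB k₀ w v n * (starRingEnd ℂ) (w n)‖ := by
    have h1 := norm_tsum_le_tsum_norm hFnorm
    have h2 := Complex.abs_re_le_norm (∑' n, goyB k₀ w v n * (starRingEnd ℂ) (w n))
    have h3 := neg_abs_le (∑' n, goyB k₀ w v n * (starRingEnd ℂ) (w n)).re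
    linarith
  calc -(∑' n, goyB k₀ w v n * (starRingEnd ℂ) (w n)).re
      ≤ ∑' n, ‖goyB k₀ w v n * (starRingEnd ℂ) (w n)‖ := hre
    _ ≤ ∑' n, φ n := Summable.tsum_le_tsum hpt hFnorm hφsum
    _ ≤ 11/8 * (Real.sqrt A * (Real.sqrt Hw * r)) := hφtsum
    _ = 11/8 * r * (Real.sqrt A * Real.sqrt Hw) := by ring
    _ ≤ ν / 2 * A + 1 / k₀ ^ 2 * (r ^ 4 / ν ^ 3) * Hw := halg
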